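/- Let μ be a free measure on ℕ and let F = {A ⊆ ℕ : μ(A) = 1}. Then F, identified via characteristic functions with a subset of the Cantor space ℕ → Bool equipped with the product topology, is not meager. -/

import Mathlib

open Filter

/-- A finitely additive probability measure defined on all subsets of `ℕ`. -/
def IsMeasure (μ : Set ℕ → ℝ) : Prop :=
  (∀ A : Set ℕ, 0 ≤ μ A ∧ μ A ≤ 1) ∧ μ Set.univ = 1 ∧
    ∀ A B : Set ℕ, Disjoint A B → μ (A ∪ B) = μ A + μ B

/-- A measure is free if it vanishes on finite sets. -/
def IsFree (μ : Set ℕ → ℝ) : Prop := ∀ A : Set ℕ, A.Finite → μ A = 0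

/-- A function is finite-to-one if all fibers are finite. -/
def FinToOne (f : ℕ → ℕ) : Prop := ∀ n : ℕ, (f ⁻¹' {n}).Finite

/-- Rudin-Blass reducibility: `ν ≤_RB μ` via a finite-to-one map. -/
def RBLe (ν μ : Set ℕ → ℝ) : Prop :=
  ∃ f : ℕ → ℕ, FinToOne f ∧ ∀ A : Set ℕ, μ (f ⁻¹' A) = ν A

/-- Rudin-Keisler reducibility: `ν ≤_RK μ`. -/
def RKLe (ν μ : Set ℕ → ℝ) : Prop :=
  ∃ f : ℕ → ℕ, ∀ A : Set ℕ, μ (f ⁻¹' A) = ν A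

/-- A measure is shift invariant if `μ(A + 1) = μ(A)`. -/
def ShiftInvariant (μ : Set ℕ → ℝ) : Prop :=
  ∀ A : Set ℕ, μ ((fun n => n + 1) '' A) = μ A

/-- A measure extends the asymptotic density. -/
def ExtendsDensity (μ : Set ℕ → ℝ) : Prop :=
  ∀ (A : Set ℕ) (d : ℝ),
    Tendsto (fun n : ℕ => ((A ∩ Set.Iio n).ncard : ℝ) / n) atTop (nhds d) → μ A = d

/-- A partition of `ℕ` indexed by `ℕ`. -/
def IsPartition (A : ℕ → Set ℕ) : Prop :=
  Pairwise (Function.onFun Disjoint A) ∧ (⋃ n, A n) = Set.univ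

/-- A selector of a partition: meets each piece in at most one point. -/
def IsSelector (S : Set ℕ) (A : ℕ → Set ℕ) : Prop :=
  ∀ n : ℕ, (S ∩ A n).Subsingleton

/-- A Q-measure: each partition into finite sets has a selector of full measure. -/
def IsQMeasure (μ : Set ℕ → ℝ) : Prop :=
  ∀ A : ℕ → Set ℕ, IsPartition A → (∀ n, (A n).Finite) →
    ∃ S : Set ℕ, IsSelector S A ∧ μ S = 1

/-- A Q⁺-measure: each partition into finite sets has a selector of positive measure. -/
def IsQPlusMeasure (μ : Set ℕ → ℝ) : Prop :=
  ∀ A : ℕ → Set ℕ, IsPartition A → (∀ n, (A n).Finite) →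
    ∃ S : Set ℕ, IsSelector S A ∧ 0 < μ S

/-- A P-measure: each partition has a pseudo-selector of the largest possible measure. -/
def IsPMeasure (μ : Set ℕ → ℝ) : Prop :=
  ∀ A : ℕ → Set ℕ, IsPartition A →
    ∃ S : Set ℕ, (∀ n, (S ∩ A n).Finite) ∧ μ S = 1 - ∑' n, μ (A n)

/-- A selective measure: each partition has a selector of the largest possible measure. -/
def IsSelectiveMeasure (μ : Set ℕ → ℝ) : Prop :=
  ∀ A : ℕ → Set ℕ, IsPartition A →
    ∃ S : Set ℕ, IsSelector S A ∧ μ S = 1 - ∑' n, μ (A n)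

/-- A non-atomic measure: finite partitions into pieces of arbitrarily small measure. -/
def NonAtomic (μ : Set ℕ → ℝ) : Prop :=
  ∀ ε : ℝ, 0 < ε → ∃ (N : ℕ) (P : Fin N → Set ℕ),
    Pairwise (Function.onFun Disjoint P) ∧ (⋃ i, P i) = Set.univ ∧ ∀ i, μ (P i) < ε

/-- The continuum hypothesis: `2 ^ ℵ₀ = ℵ₁`. -/
def CH : Prop := (2 : Cardinal.{0}) ^ Cardinal.aleph0.{0} = Cardinal.aleph.{0} 1


open Classical in
/-- The characteristic function of a set of naturals, as a point of the Cantor space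
`ℕ → Bool`. -/
noncomputable def chiSet (A : Set ℕ) : ℕ → Bool := fun n => decide (n ∈ A)

namespace Stmt11


open Set

/-- Cylinder determined by the first `m` coordinates of `s`. -/
def Cyl (m : ℕ) (s : ℕ → Bool) : Set (ℕ → Bool) := Set.pi (Set.Iio m) fun i => {s i}

lemma mem_Cyl {m : ℕ} {s x : ℕ → Bool} : x ∈ Cyl m s ↔ ∀ i < m, x i = s i := by
  simp [Cyl, Set.mem_pi]

lemma isOpen_Cyl (m : ℕ) (s : ℕ → Bool) : IsOpen (Cyl m s) :=
  isOpen_set_pi (Set.finite_Iio m) fun _ _ => isOpen_discrete _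

lemma Cyl_anti {m m' : ℕ} (h : m ≤ m') (s : ℕ → Bool) : Cyl m' s ⊆ Cyl m s := by
  intro x hx
  rw [mem_Cyl] at hx ⊢
  exact fun i hi => hx i (lt_of_lt_of_le hi h)

lemma extend_avoid {M : Set (ℕ → Bool)} (hM : IsClosed M) (hM' : interior M = ∅)
    (m : ℕ) (s : ℕ → Bool) :
    ∃ m' t, m < m' ∧ (∀ i < m, t i = s i) ∧ Cyl m' t ∩ M = ∅ := by
  have hdense : Dense Mᶜ := interior_eq_empty_iff_dense_compl.mp hM'
  obtain ⟨x, hxc, hxm⟩ := hdense.inter_open_nonempty (Cyl m s) (isOpen_Cyl m s)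
    ⟨s, mem_Cyl.mpr fun _ _ => rfl⟩
  obtain ⟨I, u, hu, hsub⟩ := (isOpen_pi_iff.mp hM.isOpen_compl) x hxm
  refine ⟨max (m + 1) (I.sup id + 1), x, lt_of_lt_of_le (Nat.lt_succ_self m) (le_max_left _ _),
    fun i hi => mem_Cyl.mp hxc i hi, ?_⟩
  rw [Set.eq_empty_iff_forall_notMem]
  intro y ⟨hy1, hy2⟩
  have : y ∈ Mᶜ := by
    apply hsub
    intro i hi
    have hilt : i < max (m + 1) (I.sup id + 1) :=
      lt_of_lt_of_le (Nat.lt_succ_of_le (Finset.le_sup (f := id) hi))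
        (le_max_right _ _)
    rw [mem_Cyl.mp hy1 i hilt]
    exact (hu i hi).2
  exact this hy2

lemma step_avoid {M : Set (ℕ → Bool)} (hM : IsClosed M) (hM' : interior M = ∅) (m : ℕ) :
    ∃ m', m < m' ∧ ∀ s : ℕ → Bool, ∃ t, (∀ i < m, t i = s i) ∧ Cyl m' t ∩ M = ∅ := by
  have h : ∀ v : Fin m → Bool, ∃ m' t, m < m' ∧
      (∀ i (h : i < m), t i = v ⟨i, h⟩) ∧ Cyl m' t ∩ M = ∅ := by
    intro v
    obtain ⟨m', t, h1, h2, h3⟩ := extend_avoid hM hM' m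
      (fun i => if h : i < m then v ⟨i, h⟩ else false)
    exact ⟨m', t, h1, fun i h => by rw [h2 i h]; simp [h], h3⟩
  choose F G h1 h2 h3 using h
  refine ⟨max (m + 1) (Finset.univ.sup F), lt_of_lt_of_le (Nat.lt_succ_self m) (le_max_left _ _),
    fun s => ?_⟩
  set v : Fin m → Bool := fun i => s i
  refine ⟨G v, fun i hi => h2 v i hi, ?_⟩
  have : Cyl (max (m + 1) (Finset.univ.sup F)) (G v) ⊆ Cyl (F v) (G v) :=
    Cyl_anti (le_trans (Finset.le_sup (Finset.mem_univ v)) (le_max_right _ _)) _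
  exact Set.eq_empty_of_subset_empty (le_trans (Set.inter_subset_inter_left _ this) (h3 v).le)

lemma key (M : ℕ → Set (ℕ → Bool)) (hcl : ∀ k, IsClosed (M k))
    (hint : ∀ k, interior (M k) = ∅) (hmono : Monotone M) :
    ∃ n : ℕ → ℕ, StrictMono n ∧
      ∀ A : Set ℕ, (∀ j, ∃ k, j ≤ k ∧ A ∩ Set.Ico (n k) (n (k + 1)) = ∅) →
        ∃ B : Set ℕ, A ⊆ B ∧ chiSet B ∉ ⋃ k, M k := by
  classical
  have hstep : ∀ k m, ∃ m', m < m' ∧ ∀ s : ℕ → Bool, ∃ t,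
      (∀ i < m, t i = s i) ∧ Cyl m' t ∩ M k = ∅ :=
    fun k m => step_avoid (hcl k) (hint k) m
  set n : ℕ → ℕ := fun k => Nat.rec 0 (fun k ih => Classical.choose (hstep k ih)) k with hn
  have hsucc : ∀ k, n (k + 1) = Classical.choose (hstep k (n k)) := fun k => rfl
  have hlt : ∀ k, n k < n (k + 1) := fun k => by
    rw [hsucc k]; exact (Classical.choose_spec (hstep k (n k))).1
  have hsm : StrictMono n := strictMono_nat_of_lt_succ hlt
  have hext : ∀ k (s : ℕ → Bool), ∃ t, (∀ i < n k, t i = s i) ∧ Cyl (n (k + 1)) t ∩ M k = ∅ :=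
    fun k s => by rw [hsucc k]; exact (Classical.choose_spec (hstep k (n k))).2 s
  refine ⟨n, hsm, fun A hA => ?_⟩
  -- the recursive patching construction
  set step2 : ℕ → (ℕ → Bool) → (ℕ → Bool) := fun k s =>
    if A ∩ Set.Ico (n k) (n (k + 1)) = ∅ then
      (fun i => if n k ≤ i ∧ i < n (k + 1) then Classical.choose (hext k s) i else s i)
    else s with hstep2
  set c : ℕ → ℕ → Bool := fun k => Nat.rec (chiSet A) step2 k with hc
  have hcsucc : ∀ k, c (k + 1) = step2 k (c k) := fun k => rfl
  -- values below n k never change afterwards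
  have hlow : ∀ k i, i < n k → c (k + 1) i = c k i := by
    intro k i hi
    rw [hcsucc]
    simp only [hstep2]
    split
    · beta_reduce
      rw [if_neg]
      rintro ⟨h1, -⟩
      exact absurd hi (not_lt.mpr h1)
    · rfl
  have hstab : ∀ k j, k ≤ j → ∀ i, i < n k → c j i = c k i := by
    intro k j hkj
    induction j, hkj using Nat.le_induction with
    | base => intro i _; rfl
    | succ j hkj ih =>
      intro i hi
      rw [hlow j i (lt_of_lt_of_le hi (hsm.monotone hkj)), ih i hi]
  have hnk : ∀ k, k ≤ n k := fun k => hsm.le_apply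
  set b : ℕ → Bool := fun i => c (i + 1) i with hb
  have hbk : ∀ k i, i < n k → b i = c k i := by
    intro k i hi
    have h1 : c (max (i + 1) k) i = c (i + 1) i :=
      hstab (i + 1) _ (le_max_left _ _) i (lt_of_lt_of_le (Nat.lt_succ_self i) (hnk (i + 1)))
    have h2 : c (max (i + 1) k) i = c k i := hstab k _ (le_max_right _ _) i hi
    rw [hb]; simp only []
    rw [← h1, h2]
  -- b extends A
  have hsup : ∀ i, i ∈ A → b i = true := by
    have claim : ∀ k i, i ∈ A → c k i = true := by
      intro k
      induction k with
      | zero => intro i hi; simp [hc, chiSet, hi]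
      | succ k ih =>
        intro i hi
        rw [hcsucc]
        simp only [hstep2]
        split
        · rename_i hke
          beta_reduce
          split
          · rename_i hik
            exact absurd (Set.mem_inter hi (Set.mem_Ico.mpr hik)) (by rw [hke]; simp)
          · exact ih i hi
        · exact ih i hi
    intro i hi
    exact claim (i + 1) i hi
  -- avoidance
  have havoid : ∀ k, A ∩ Set.Ico (n k) (n (k + 1)) = ∅ → b ∉ M k := by
    intro k hk hbM
    obtain ⟨ht1, ht2⟩ := Classical.choose_spec (hext k (c k))
    set t := Classical.choose (hext k (c k)) with hts
    have hmem : b ∈ Cyl (n (k + 1)) t := by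
      rw [mem_Cyl]
      intro i hi
      rw [hbk (k + 1) i hi, hcsucc]
      simp only [hstep2]
      rw [if_pos hk]
      split
      · rfl
      · rename_i hni
        push_neg at hni
        rcases lt_or_ge i (n k) with h | h
        · exact (ht1 i h).symm
        · exact absurd (hni h) (not_le.mpr hi)
    have : b ∈ Cyl (n (k + 1)) t ∩ M k := ⟨hmem, hbM⟩
    rw [ht2] at this
    exact this
  refine ⟨{i | b i = true}, fun i hi => hsup i hi, ?_⟩
  have hcb : chiSet {i | b i = true} = b := by
    funext i
    simp only [chiSet, Set.mem_setOf_eq]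
    simp
  rw [hcb]
  intro hmem
  obtain ⟨_, ⟨j, rfl⟩, hj⟩ := hmem
  obtain ⟨k, hjk, hk⟩ := hA j
  exact havoid k hk (hmono hjk hj)

lemma nwd_union {X : Type*} [TopologicalSpace X] {A B : Set X} (hA : IsClosed A)
    (hiA : interior A = ∅) (hB : IsClosed B) (hiB : interior B = ∅) :
    interior (A ∪ B) = ∅ := by
  have h1 : interior (A ∪ B) \ A ⊆ interior B := by
    rw [(isOpen_interior.sdiff hA).subset_interior_iff]
    intro x ⟨hx1, hx2⟩
    rcases interior_subset hx1 with h | h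
    · exact absurd h hx2
    · exact h
  rw [hiB, Set.subset_empty_iff, Set.diff_eq_empty] at h1
  have h2 : interior (A ∪ B) ⊆ interior A := isOpen_interior.subset_interior_iff.mpr h1
  rw [hiA, Set.subset_empty_iff] at h2
  exact h2

lemma mod_split {L r : ℕ} (hr : r < 2 ^ L) (x : ℕ) (hx : x < 2 ^ (L + 1)) :
    x % 2 ^ L = r ↔ x = r ∨ x = r + 2 ^ L := by
  constructor
  · intro h
    have hd := Nat.div_add_mod x (2 ^ L)
    have hq : x / 2 ^ L < 2 := Nat.div_lt_of_lt_mul (by rw [pow_succ] at hx; exact hx)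
    interval_cases h' : x / 2 ^ L <;> omega
  · rintro (rfl | rfl)
    · exact Nat.mod_eq_of_lt hr
    · rw [Nat.add_mod_right]; exact Nat.mod_eq_of_lt hr

end Stmt11

/-- The family of measure-one sets of a free measure, viewed as a subset of the Cantor
space `ℕ → Bool` (with the product topology), is non-meager. -/
theorem stmt_11 (μ : Set ℕ → ℝ) (hμ : IsMeasure μ) (hfree : IsFree μ) :
    ¬ IsMeagre (chiSet '' {A : Set ℕ | μ A = 1}) := by
  classical
  intro hmeag
  obtain ⟨S, hS, hSc, hsubS⟩ := isMeagre_iff_countable_union_isNowhereDense.mp hmeag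
  obtain ⟨f, hf⟩ := (hSc.insert ∅).exists_eq_range (Set.insert_nonempty _ _)
  have hnwd : ∀ k, interior (closure (f k)) = ∅ := by
    intro k
    have : f k ∈ insert ∅ S := hf ▸ Set.mem_range_self k
    rcases this with h | h
    · rw [h]; simp
    · exact hS _ h
  set M : ℕ → Set (ℕ → Bool) := fun k => ⋃ i ∈ Set.Iic k, closure (f i) with hM
  have hMsucc : ∀ k, M (k + 1) = closure (f (k + 1)) ∪ M k := by
    intro k
    ext x
    simp only [hM, Set.mem_iUnion, Set.mem_union, Set.mem_Iic]
    constructor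
    · rintro ⟨i, hi, hx⟩
      rcases Nat.eq_or_lt_of_le hi with h | h
      · exact Or.inl (h ▸ hx)
      · exact Or.inr ⟨i, Nat.lt_succ_iff.mp h, hx⟩
    · rintro (hx | ⟨i, hi, hx⟩)
      · exact ⟨k + 1, le_rfl, hx⟩
      · exact ⟨i, Nat.le_succ_of_le hi, hx⟩
  have hcl : ∀ k, IsClosed (M k) :=
    fun k => (Set.finite_Iic k).isClosed_biUnion fun i _ => isClosed_closure
  have hint : ∀ k, interior (M k) = ∅ := by
    intro k
    induction k with
    | zero =>
      have : M 0 = closure (f 0) := by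
        rw [hM]; simp
      rw [this]; exact hnwd 0
    | succ k ih =>
      rw [hMsucc k]
      exact Stmt11.nwd_union isClosed_closure (hnwd (k + 1)) (hcl k) ih
  have hmono : Monotone M :=
    fun a b hab => Set.biUnion_subset_biUnion_left (Set.Iic_subset_Iic.mpr hab)
  have hcover : chiSet '' {A | μ A = 1} ⊆ ⋃ k, M k := by
    intro x hx
    obtain ⟨t, ht, hxt⟩ := hsubS hx
    have : t ∈ Set.range f := hf ▸ Set.mem_insert_of_mem _ ht
    obtain ⟨k, hk⟩ := this
    exact Set.mem_iUnion.mpr ⟨k, Set.mem_biUnion (Set.mem_Iic.mpr le_rfl)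
      (hk ▸ subset_closure hxt)⟩
  obtain ⟨n, hsm, hkey⟩ := Stmt11.key M hcl hint hmono
  -- measure basics
  obtain ⟨hb01, huniv, hadd⟩ := hμ
  have hmono_meas : ∀ {A B : Set ℕ}, A ⊆ B → μ A ≤ μ B := by
    intro A B hAB
    have h := hadd A (B \ A) Set.disjoint_sdiff_right
    rw [Set.union_diff_cancel hAB] at h
    linarith [(hb01 (B \ A)).1]
  have hcompl : ∀ A : Set ℕ, μ Aᶜ = 1 - μ A := by
    intro A
    have h := hadd A Aᶜ disjoint_compl_right
    rw [Set.union_compl_self, huniv] at h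
    linarith
  have hsubadd : ∀ A B : Set ℕ, μ (A ∪ B) ≤ μ A + μ B := by
    intro A B
    have h := hadd A (B \ A) Set.disjoint_sdiff_right
    rw [Set.union_diff_self] at h
    linarith [hmono_meas (Set.diff_subset (s := B) (t := A))]
  -- the induced "measure" on index sets
  set UU : Set ℕ → Set ℕ := fun T => ⋃ k ∈ T, Set.Ico (n k) (n (k + 1)) with hUU
  have hUmono : ∀ {T T' : Set ℕ}, T ⊆ T' → UU T ⊆ UU T' :=
    fun h => Set.biUnion_subset_biUnion_left h
  have hIdisj : ∀ {k k' : ℕ}, k ≠ k' →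
      Disjoint (Set.Ico (n k) (n (k + 1))) (Set.Ico (n k') (n (k' + 1))) := by
    intro k k' hne
    rw [Set.Ico_disjoint_Ico]
    rcases hne.lt_or_gt with h | h
    · exact le_trans (min_le_left _ _) (le_trans (hsm.monotone h) (le_max_right _ _))
    · exact le_trans (min_le_right _ _) (le_trans (hsm.monotone h) (le_max_left _ _))
  have hUdisj : ∀ {T T' : Set ℕ}, Disjoint T T' → Disjoint (UU T) (UU T') := by
    intro T T' h
    rw [Set.disjoint_left]
    intro i hi hi'
    simp only [hUU, Set.mem_iUnion] at hi hi'
    obtain ⟨k, hkT, hik⟩ := hi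
    obtain ⟨k', hk'T, hik'⟩ := hi'
    have hne : k ≠ k' := fun e => (Set.disjoint_left.mp h hkT) (e ▸ hk'T)
    exact Set.disjoint_left.mp (hIdisj hne) hik hik'
  have hUadd : ∀ {T T' : Set ℕ}, Disjoint T T' →
      μ (UU (T ∪ T')) = μ (UU T) + μ (UU T') := by
    intro T T' h
    rw [hUU]
    simp only []
    rw [Set.biUnion_union]
    exact hadd _ _ (hUdisj h)
  have hUfin : ∀ {T : Set ℕ}, T.Finite → μ (UU T) = 0 :=
    fun h => hfree _ (h.biUnion fun k _ => Set.finite_Ico _ _)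
  have hUpos : ∀ T : Set ℕ, T.Infinite → 0 < μ (UU T) := by
    intro T hT
    by_contra hle
    push_neg at hle
    have hA : ∀ j, ∃ k, j ≤ k ∧ (UU T)ᶜ ∩ Set.Ico (n k) (n (k + 1)) = ∅ := by
      intro j
      obtain ⟨k, hkT, hjk⟩ := hT.exists_gt j
      refine ⟨k, hjk.le, ?_⟩
      rw [Set.eq_empty_iff_forall_notMem]
      rintro i ⟨hic, hik⟩
      exact hic (Set.mem_biUnion hkT hik)
    obtain ⟨B, hAB, hB⟩ := hkey (UU T)ᶜ hA
    have hBne : μ B ≠ 1 := fun h => hB (hcover ⟨B, h, rfl⟩)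
    have h1 : μ (UU T)ᶜ = 1 - μ (UU T) := hcompl _
    have h2 : μ (UU T)ᶜ ≤ μ B := hmono_meas hAB
    have h3 := (hb01 B).2
    have h4 := (hb01 (UU T)).1
    exact hBne (by linarith)
  -- residue classes
  set TT : ℕ → ℕ → Set ℕ := fun L r => {k | k % 2 ^ L = r} with hTT
  have hsplit : ∀ L r, r < 2 ^ L →
      TT L r = TT (L + 1) r ∪ TT (L + 1) (r + 2 ^ L) := by
    intro L r hr
    ext k
    have hdvd : (2 : ℕ) ^ L ∣ 2 ^ (L + 1) := pow_dvd_pow 2 (Nat.le_succ L)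
    have hmm : k % 2 ^ (L + 1) % 2 ^ L = k % 2 ^ L := Nat.mod_mod_of_dvd k hdvd
    have hxlt : k % 2 ^ (L + 1) < 2 ^ (L + 1) := Nat.mod_lt _ (pow_pos (by norm_num) _)
    simp only [hTT, Set.mem_setOf_eq, Set.mem_union]
    rw [← hmm]
    exact Stmt11.mod_split hr _ hxlt
  have hTdisj : ∀ L r, Disjoint (TT (L + 1) r) (TT (L + 1) (r + 2 ^ L)) := by
    intro L r
    rw [Set.disjoint_left]
    intro k h1 h2
    simp only [hTT, Set.mem_setOf_eq] at h1 h2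
    have : (0:ℕ) < 2 ^ L := pow_pos (by norm_num) _
    omega
  have hTinf : ∀ L r, r < 2 ^ L → (TT L r).Infinite := by
    intro L r hr
    have hpos : (0:ℕ) < 2 ^ L := pow_pos (by norm_num) _
    have hinj : Function.Injective (fun m : ℕ => r + 2 ^ L * m) := by
      intro a b hab
      simp only [] at hab
      exact Nat.eq_of_mul_eq_mul_left hpos (Nat.add_left_cancel hab)
    refine Set.infinite_of_injective_forall_mem hinj fun m => ?_
    simp only [hTT, Set.mem_setOf_eq]
    rw [Nat.add_mul_mod_self_left]
    exact Nat.mod_eq_of_lt hr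
  -- the halving sequence
  set rr : ℕ → ℕ := fun L => Nat.rec 0 (fun L ih =>
    if μ (UU (TT (L + 1) ih)) ≤ μ (UU (TT (L + 1) (ih + 2 ^ L))) then ih else ih + 2 ^ L) L
    with hrr
  have hrsucc : ∀ L, rr (L + 1) =
      if μ (UU (TT (L + 1) (rr L))) ≤ μ (UU (TT (L + 1) (rr L + 2 ^ L))) then rr L
      else rr L + 2 ^ L := fun L => rfl
  have hrlt : ∀ L, rr L < 2 ^ L := by
    intro L
    induction L with
    | zero => simp [hrr]
    | succ L ih =>
      rw [hrsucc]
      have h2 : (2:ℕ) ^ (L + 1) = 2 ^ L * 2 := pow_succ 2 L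
      split <;> omega
  have hbound : ∀ L, μ (UU (TT L (rr L))) ≤ (1 / 2) ^ L := by
    intro L
    induction L with
    | zero =>
      simp only [pow_zero]
      exact (hb01 _).2
    | succ L ih =>
      have heq : μ (UU (TT L (rr L))) =
          μ (UU (TT (L + 1) (rr L))) + μ (UU (TT (L + 1) (rr L + 2 ^ L))) := by
        rw [hsplit L (rr L) (hrlt L)]
        exact hUadd (hTdisj L (rr L))
      have hp : ((1:ℝ) / 2) ^ (L + 1) = (1 / 2) ^ L * (1 / 2) := pow_succ _ _
      rw [hrsucc]
      split
      · rename_i h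
        rw [hp]; linarith
      · rename_i h
        push_neg at h
        rw [hp]; linarith
  have hnested : ∀ L L', L ≤ L' → TT L' (rr L') ⊆ TT L (rr L) := by
    intro L L' hLL'
    induction L', hLL' using Nat.le_induction with
    | base => exact subset_rfl
    | succ L' hLL' ih =>
      refine subset_trans ?_ ih
      intro k hk
      simp only [hTT, Set.mem_setOf_eq] at hk ⊢
      have hdvd : (2 : ℕ) ^ L' ∣ 2 ^ (L' + 1) := pow_dvd_pow 2 (Nat.le_succ L')
      have hmm : k % 2 ^ (L' + 1) % 2 ^ L' = k % 2 ^ L' := Nat.mod_mod_of_dvd k hdvd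
      rw [← hmm, hk, hrsucc]
      have hl := hrlt L'
      split
      · exact Nat.mod_eq_of_lt hl
      · rw [Nat.add_mod_right]; exact Nat.mod_eq_of_lt hl
  -- the diagonal set
  set d : ℕ → ℕ := fun L => rr L + 2 ^ L * (L + 1) with hd
  have hdmem : ∀ L, d L ∈ TT L (rr L) := by
    intro L
    simp only [hd, hTT, Set.mem_setOf_eq]
    rw [Nat.add_mul_mod_self_left]
    exact Nat.mod_eq_of_lt (hrlt L)
  have hdsm : StrictMono d := by
    apply strictMono_nat_of_lt_succ
    intro L
    simp only [hd]
    have h1 := hrlt L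
    have h2 : (2:ℕ) ^ (L + 1) = 2 ^ L * 2 := pow_succ 2 L
    nlinarith [pow_pos (show (0:ℕ) < 2 by norm_num) L]
  set D : Set ℕ := Set.range d with hD
  have hDinf : D.Infinite := Set.infinite_range_of_injective hdsm.injective
  have hDsub : ∀ L, D ⊆ TT L (rr L) ∪ (d '' Set.Iio L) := by
    rintro L x ⟨j, rfl⟩
    rcases lt_or_ge j L with h | h
    · exact Or.inr ⟨j, h, rfl⟩
    · exact Or.inl (hnested L j h (hdmem j))
  have hμD : ∀ L, μ (UU D) ≤ (1 / 2) ^ L := by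
    intro L
    have hUun : UU (TT L (rr L) ∪ d '' Set.Iio L) =
        UU (TT L (rr L)) ∪ UU (d '' Set.Iio L) := by
      rw [hUU]; simp only []; rw [Set.biUnion_union]
    calc μ (UU D) ≤ μ (UU (TT L (rr L) ∪ d '' Set.Iio L)) :=
          hmono_meas (hUmono (hDsub L))
      _ ≤ μ (UU (TT L (rr L))) + μ (UU (d '' Set.Iio L)) := by
          rw [hUun]; exact hsubadd _ _
      _ ≤ (1 / 2) ^ L + 0 :=
          add_le_add (hbound L) (le_of_eq (hUfin ((Set.finite_Iio L).image d)))
      _ = (1 / 2) ^ L := add_zero _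
  obtain ⟨L, hL⟩ := exists_pow_lt_of_lt_one (hUpos D hDinf) (by norm_num : (1:ℝ) / 2 < 1)
  exact absurd (hμD L) (not_le.mpr hL)
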